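/- Let (X,d) be an unbounded metric space and let p ∈ X. Then the set Sp(X) = {d(x,p) : x ∈ X} is nonporous at infinity (p⁺(Sp(X),∞) = 0) if and only if for every scaling sequence r̃ = (r_n), every strictly increasing sequence (n_k) of natural numbers (giving the subsequence r̃' = (r_{n_k})), and every x̃ = (x_k) ∈ Seq(X,r̃'), there exists ỹ = (y_n) ∈ Seq(X,r̃) with y_{n_k} = x_k for every k. -/

import Mathlib

open Filter Topology

/-- Two sequences of points of `X` are mutually stable with respect to the scaling
sequence `r` if the finite limit `lim dist (x n) (y n) / r n` exists. -/
def MutStable {X : Type*} [MetricSpace X] (r : ℕ → ℝ) (x y : ℕ → X) : Prop :=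
  ∃ l : ℝ, Tendsto (fun n => dist (x n) (y n) / r n) atTop (𝓝 l)

/-- `Seq(X, r̃)`: the set of sequences `x` of points of `X` such that the finite limit
`d̃_r̃(x) = lim dist (x n) p / r n` exists. -/
def SeqSet {X : Type*} [MetricSpace X] (p : X) (r : ℕ → ℝ) : Set (ℕ → X) :=
  {x | ∃ l : ℝ, Tendsto (fun n => dist (x n) p / r n) atTop (𝓝 l)}

/-- `X̃⁰_{∞,r̃}`: the set of sequences `z` of points of `X` with
`lim dist (z n) p / r n = 0`. -/
def NullSeq {X : Type*} [MetricSpace X] (p : X) (r : ℕ → ℝ) : Set (ℕ → X) :=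
  {z | Tendsto (fun n => dist (z n) p / r n) atTop (𝓝 0)}

/-- A set `F ⊆ Seq(X, r̃)` is self-stable if any two of its elements are mutually
stable. -/
def SelfStable {X : Type*} [MetricSpace X] (p : X) (r : ℕ → ℝ) (F : Set (ℕ → X)) : Prop :=
  F ⊆ SeqSet p r ∧ ∀ x ∈ F, ∀ y ∈ F, MutStable r x y

/-- A maximal self-stable subset of `Seq(X, r̃)`. -/
def MaxSelfStable {X : Type*} [MetricSpace X] (p : X) (r : ℕ → ℝ) (F : Set (ℕ → X)) : Prop :=
  SelfStable p r F ∧ ∀ G, SelfStable p r G → F ⊆ G → F = G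

/-- `l(∞, h, E)`: the length of the longest open interval contained in `[0, h] \ E`. -/
noncomputable def gapLen (E : Set ℝ) (h : ℝ) : ℝ :=
  sSup {L : ℝ | ∃ a b : ℝ, 0 ≤ a ∧ a ≤ b ∧ b ≤ h ∧ Set.Ioo a b ∩ E = ∅ ∧ L = b - a}

/-- The porosity of `E ⊆ [0, ∞)` at infinity: `p⁺(E, ∞) = limsup_{h → ∞} l(∞, h, E) / h`. -/
noncomputable def porosityAtInfty (E : Set ℝ) : ℝ :=
  Filter.limsup (fun h => gapLen E h / h) Filter.atTop


section Helpers

lemma gapSet_nonempty (E : Set ℝ) {h : ℝ} (hh : 0 ≤ h) :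
    {L : ℝ | ∃ a b : ℝ, 0 ≤ a ∧ a ≤ b ∧ b ≤ h ∧ Set.Ioo a b ∩ E = ∅ ∧ L = b - a}.Nonempty :=
  ⟨0, 0, 0, le_refl 0, le_refl 0, hh, by simp, by ring⟩

lemma gapSet_bddAbove (E : Set ℝ) (h : ℝ) :
    BddAbove {L : ℝ | ∃ a b : ℝ, 0 ≤ a ∧ a ≤ b ∧ b ≤ h ∧ Set.Ioo a b ∩ E = ∅ ∧ L = b - a} := by
  refine ⟨h, fun L hL => ?_⟩
  obtain ⟨a, b, ha, hab, hbh, -, rfl⟩ := hL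
  linarith

lemma gapLen_nonneg (E : Set ℝ) {h : ℝ} (hh : 0 ≤ h) : 0 ≤ gapLen E h :=
  le_csSup (gapSet_bddAbove E h) ⟨0, 0, le_refl 0, le_refl 0, hh, by simp, by ring⟩

lemma le_gapLen (E : Set ℝ) {h a b : ℝ} (ha : 0 ≤ a) (hab : a ≤ b) (hbh : b ≤ h)
    (hE : Set.Ioo a b ∩ E = ∅) : b - a ≤ gapLen E h :=
  le_csSup (gapSet_bddAbove E h) ⟨a, b, ha, hab, hbh, hE, rfl⟩

lemma gapLen_le (E : Set ℝ) {h : ℝ} (hh : 0 ≤ h) : gapLen E h ≤ h := by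
  refine csSup_le (gapSet_nonempty E hh) fun L hL => ?_
  obtain ⟨a, b, ha, hab, hbh, -, rfl⟩ := hL
  linarith

/-- If the gap length is smaller than `b - a`, the interval `(a,b) ⊆ [0,h]` meets `E`. -/
lemma meets_of_gapLen_lt (E : Set ℝ) {h a b : ℝ} (ha : 0 ≤ a) (hab : a ≤ b) (hbh : b ≤ h)
    (hlt : gapLen E h < b - a) : (Set.Ioo a b ∩ E).Nonempty := by
  rw [Set.nonempty_iff_ne_empty]
  intro he
  exact absurd (le_gapLen E ha hab hbh he) (not_le.mpr hlt)

lemma exists_gap_of_lt_gapLen (E : Set ℝ) {h c : ℝ} (hh : 0 ≤ h) (hc : c < gapLen E h) :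
    ∃ a b : ℝ, 0 ≤ a ∧ a ≤ b ∧ b ≤ h ∧ Set.Ioo a b ∩ E = ∅ ∧ c < b - a := by
  obtain ⟨L, hL, hcL⟩ := exists_lt_of_lt_csSup (gapSet_nonempty E hh) hc
  obtain ⟨a, b, ha, hab, hbh, hE, rfl⟩ := hL
  exact ⟨a, b, ha, hab, hbh, hE, hcL⟩

lemma porosity_eq_zero_iff (E : Set ℝ) :
    porosityAtInfty E = 0 ↔ ∀ ε > (0:ℝ), ∀ᶠ h in atTop, gapLen E h ≤ ε * h := by
  constructor
  · intro h0 ε hε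
    have hb : IsBoundedUnder (· ≤ ·) atTop (fun h => gapLen E h / h) := by
      refine ⟨1, eventually_atTop.mpr ⟨1, fun h hh => ?_⟩⟩
      have h0h : (0:ℝ) < h := lt_of_lt_of_le one_pos hh
      have := gapLen_le E h0h.le
      exact div_le_one_of_le₀ this h0h.le
    have hlt : limsup (fun h => gapLen E h / h) atTop < ε := by
      rw [porosityAtInfty] at h0; rw [h0]; exact hε
    filter_upwards [eventually_lt_of_limsup_lt hlt hb, eventually_gt_atTop (0:ℝ)] with h h1 h2
    rw [div_lt_iff₀ h2] at h1
    exact h1.le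
  · intro H
    have ht : Tendsto (fun h => gapLen E h / h) atTop (𝓝 0) := by
      rw [Metric.tendsto_atTop]
      intro ε hε
      obtain ⟨N, hN⟩ := eventually_atTop.mp (H (ε/2) (by linarith))
      refine ⟨max N 1, fun h hh => ?_⟩
      have h1 : (1:ℝ) ≤ h := le_trans (le_max_right N 1) hh
      have h0h : (0:ℝ) < h := lt_of_lt_of_le one_pos h1
      have hg := hN h (le_trans (le_max_left N 1) hh)
      have hg0 := gapLen_nonneg E h0h.le
      rw [Real.dist_eq, sub_zero, abs_of_nonneg (div_nonneg hg0 h0h.le)]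
      have : gapLen E h / h ≤ ε/2 := by
        rw [div_le_iff₀ h0h]; linarith [hg]
      linarith
    exact ht.limsup_eq

section Fwd
variable {X : Type*} [MetricSpace X] (p : X)

/-- approximation claim -/
lemma approx_claim (h0 : porosityAtInfty {t : ℝ | ∃ x : X, dist x p = t} = 0)
    (r : ℕ → ℝ) (hr : ∀ n, 0 < r n) (hrt : Tendsto r atTop atTop)
    {l : ℝ} (hl : 0 ≤ l) {ε : ℝ} (hε : 0 < ε) :
    ∀ᶠ n in atTop, ∃ x' : X, |dist x' p - l * r n| ≤ ε * r n := by
  set E := {t : ℝ | ∃ x : X, dist x p = t} with hE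
  rcases eq_or_lt_of_le hl with hl0 | hlpos
  · filter_upwards with n
    refine ⟨p, ?_⟩
    rw [dist_self, ← hl0]
    simp [abs_nonneg, le_of_lt (mul_pos hε (hr n))]
  · set η := min ε l with hη
    have hηpos : 0 < η := lt_min hε hlpos
    have hηl : η ≤ l := min_le_right ε l
    have hηε : η ≤ ε := min_le_left ε l
    have hlη : 0 < l + η := by linarith
    have hporo := (porosity_eq_zero_iff E).mp h0 (η / (l + η)) (div_pos hηpos hlη)
    obtain ⟨N, hN⟩ := eventually_atTop.mp hporo
    have hev : ∀ᶠ n in atTop, N ≤ (l + η) * r n := by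
      have : Tendsto (fun n => (l + η) * r n) atTop atTop :=
        hrt.const_mul_atTop hlη
      exact this.eventually_ge_atTop N
    filter_upwards [hev] with n hn
    have hrn := hr n
    have hgap : gapLen E ((l + η) * r n) ≤ η * r n := by
      have := hN _ hn
      calc gapLen E ((l + η) * r n) ≤ η / (l + η) * ((l + η) * r n) := this
        _ = η * r n := by field_simp
    have hmeet : (Set.Ioo ((l - η) * r n) ((l + η) * r n) ∩ E).Nonempty := by
      apply meets_of_gapLen_lt E (mul_nonneg (by linarith) hrn.le) (by nlinarith) le_rfl
      have : (l + η) * r n - (l - η) * r n = 2 * (η * r n) := by ring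
      rw [this]
      nlinarith [mul_pos hηpos hrn]
    obtain ⟨s, hsI, hsE⟩ := hmeet
    obtain ⟨x', hx'⟩ := hsE
    refine ⟨x', ?_⟩
    rw [hx']
    rw [abs_le]
    constructor <;> nlinarith [hsI.1, hsI.2]

lemma fwd_dir (h0 : porosityAtInfty {t : ℝ | ∃ x : X, dist x p = t} = 0) :
    ∀ r : ℕ → ℝ, (∀ n, 0 < r n) → Tendsto r atTop atTop →
      ∀ nk : ℕ → ℕ, StrictMono nk →
        ∀ x ∈ SeqSet p (fun k => r (nk k)),
          ∃ y ∈ SeqSet p r, ∀ k, y (nk k) = x k := by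
  intro r hr hrt nk hnk x hx
  obtain ⟨l, hlx⟩ := hx
  have hl : 0 ≤ l := by
    apply le_of_tendsto_of_tendsto' tendsto_const_nhds hlx
    intro n; exact div_nonneg dist_nonneg (hr (nk n)).le
  -- the infimum of achievable errors
  set A : ℕ → Set ℝ := fun n => (fun s => |s - l * r n|) '' {t : ℝ | ∃ x : X, dist x p = t} with hA
  have hAne : ∀ n, (A n).Nonempty := fun n => ⟨|0 - l * r n|, ⟨0, ⟨p, dist_self p⟩, rfl⟩⟩
  have hAbd : ∀ n, BddBelow (A n) := by
    intro n
    refine ⟨0, fun q hq => ?_⟩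
    obtain ⟨s, -, rfl⟩ := hq
    exact abs_nonneg _
  set g : ℕ → ℝ := fun n => sInf (A n) with hg
  have hg0 : ∀ n, 0 ≤ g n := fun n => le_csInf (hAne n) (fun q hq => by
    obtain ⟨s, -, rfl⟩ := hq; exact abs_nonneg _)
  have hgr : Tendsto (fun n => g n / r n) atTop (𝓝 0) := by
    rw [Metric.tendsto_atTop]
    intro ε hε
    have := approx_claim p h0 r hr hrt hl (half_pos hε)
    obtain ⟨N, hN⟩ := eventually_atTop.mp this
    refine ⟨N, fun n hn => ?_⟩
    obtain ⟨x', hx'⟩ := hN n hn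
    have hgle : g n ≤ ε / 2 * r n := by
      refine le_trans (csInf_le (hAbd n) ⟨dist x' p, ⟨x', rfl⟩, rfl⟩) hx'
    have hrn := hr n
    rw [Real.dist_eq, sub_zero, abs_of_nonneg (div_nonneg (hg0 n) hrn.le)]
    rw [div_lt_iff₀ hrn]
    nlinarith
  -- choose near-optimal points
  have hchoice : ∀ n : ℕ, ∃ x' : X, |dist x' p - l * r n| < g n + r n / (n + 1) := by
    intro n
    have hpos : (0:ℝ) < r n / (n + 1) := div_pos (hr n) (by positivity)
    obtain ⟨q, hqA, hqlt⟩ := Real.lt_sInf_add_pos (hAne n) hpos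
    obtain ⟨s, ⟨x', hx'⟩, rfl⟩ := hqA
    exact ⟨x', by rw [hx']; exact hqlt⟩
  choose y' hy' using hchoice
  have hy'lim : Tendsto (fun n => dist (y' n) p / r n) atTop (𝓝 l) := by
    rw [tendsto_iff_norm_sub_tendsto_zero]
    apply squeeze_zero (fun n => norm_nonneg _)
      (g := fun n => g n / r n + 1 / (n + 1 : ℝ))
    · intro n
      have hrn := hr n
      have : dist (y' n) p / r n - l = (dist (y' n) p - l * r n) / r n := by
        field_simp
      rw [Real.norm_eq_abs, this, abs_div, abs_of_pos hrn, div_le_iff₀ hrn]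
      have := (hy' n).le
      have h2 : g n / r n * r n = g n := by field_simp
      have h3 : (1 / ((n:ℝ) + 1)) * r n = r n / (n + 1) := by ring
      rw [add_mul, h2, h3]
      exact this
    · have h1 : Tendsto (fun n : ℕ => 1 / (n + 1 : ℝ)) atTop (𝓝 0) :=
        tendsto_one_div_add_atTop_nhds_zero_nat
      simpa using hgr.add h1
  -- merge
  classical
  refine ⟨fun n => if h : ∃ k, nk k = n then x h.choose else y' n, ?_, ?_⟩
  · refine ⟨l, ?_⟩
    rw [Metric.tendsto_atTop]
    intro ε hε
    obtain ⟨K, hK⟩ := (Metric.tendsto_atTop.mp hlx) ε hε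
    obtain ⟨N, hN⟩ := (Metric.tendsto_atTop.mp hy'lim) ε hε
    refine ⟨max (nk K) N, fun n hn => ?_⟩
    by_cases h : ∃ k, nk k = n
    · simp only [dif_pos h]
      have hk := h.choose_spec
      have hkK : K ≤ h.choose := by
        rw [← hnk.le_iff_le, hk]
        exact le_trans (le_max_left _ _) hn
      have h2 := hK h.choose hkK
      simp only [hk] at h2
      exact h2
    · simp only [dif_neg h]
      exact hN n (le_trans (le_max_right _ _) hn)
  · intro k
    have h : ∃ k', nk k' = nk k := ⟨k, rfl⟩
    simp only [dif_pos h]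
    congr 1
    exact hnk.injective h.choose_spec
end Fwd

section Bwd
variable {X : Type*} [MetricSpace X] (p : X)

lemma bwd_dir (hX : ∀ C : ℝ, ∃ x : X, C < dist x p)
    (H : ∀ r : ℕ → ℝ, (∀ n, 0 < r n) → Tendsto r atTop atTop →
      ∀ nk : ℕ → ℕ, StrictMono nk →
        ∀ x ∈ SeqSet p (fun k => r (nk k)),
          ∃ y ∈ SeqSet p r, ∀ k, y (nk k) = x k) :
    porosityAtInfty {t : ℝ | ∃ x : X, dist x p = t} = 0 := by
  set E := {t : ℝ | ∃ x : X, dist x p = t} with hE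
  rw [porosity_eq_zero_iff]
  by_contra hcon
  push_neg at hcon
  obtain ⟨ε, hε, hfreq⟩ := hcon
  have hfreq : ∃ᶠ h in atTop, ¬ gapLen E h ≤ ε * h := hfreq.mono fun h hh => not_le.mpr hh
  -- for each k, find a gap whose right end is > k+1 and whose length is > ε/2 * b
  have hgaps : ∀ k : ℕ, ∃ a b : ℝ, 0 ≤ a ∧ a ≤ b ∧ Set.Ioo a b ∩ E = ∅ ∧
      (k:ℝ) + 1 < b ∧ ε / 2 * b < b - a := by
    intro k
    have := (frequently_atTop.mp hfreq) (max (2*((k:ℝ)+1)/ε) 1)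
    obtain ⟨h, hh, hlt⟩ := this
    rw [not_le] at hlt
    have h1 : (1:ℝ) ≤ h := le_trans (le_max_right _ _) hh
    have h2 : 2*((k:ℝ)+1)/ε ≤ h := le_trans (le_max_left _ _) hh
    have hεh : 0 < ε * h := mul_pos hε (by linarith)
    have hhalf : ε * h / 2 < gapLen E h := by linarith
    obtain ⟨a, b, ha, hab, hbh, hgap, hba⟩ := exists_gap_of_lt_gapLen E (by linarith) hhalf
    refine ⟨a, b, ha, hab, hgap, ?_, ?_⟩
    · have : 2*((k:ℝ)+1) ≤ ε * h := by
        rw [div_le_iff₀ hε] at h2; linarith [h2]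
      nlinarith
    · nlinarith
  choose a b ha hab hgap hbk hba using hgaps
  choose z hz using fun k : ℕ => hX (k : ℝ)
  set c : ℕ → ℝ := fun k => (a k + b k) / 2 with hc
  have hbpos : ∀ k, 0 < b k := fun k => lt_of_le_of_lt (by positivity) (hbk k)
  have hcpos : ∀ k, 0 < c k := by
    intro k
    have := hba k
    have := hbpos k
    have := ha k
    simp only [hc]
    nlinarith
  have hcb : ∀ k, c k ≤ b k := by
    intro k; have := hba k; have := hbpos k; simp only [hc]; nlinarith
  have hzpos : ∀ k, 0 < dist (z k) p := fun k => lt_of_le_of_lt (Nat.cast_nonneg k) (hz k)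
  set r : ℕ → ℝ := fun n => if n % 2 = 0 then dist (z (n/2)) p else c (n/2) with hr
  have hr2k : ∀ k, r (2*k) = dist (z k) p := by
    intro k
    simp only [hr]
    rw [if_pos (by omega)]
    have : 2*k/2 = k := by omega
    rw [this]
  have hr2k1 : ∀ k, r (2*k+1) = c k := by
    intro k
    simp only [hr]
    rw [if_neg (by omega)]
    have : (2*k+1)/2 = k := by omega
    rw [this]
  have hrpos : ∀ n, 0 < r n := by
    intro n
    simp only [hr]
    split
    · exact hzpos _
    · exact hcpos _
  have hrtop : Tendsto r atTop atTop := by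
    apply tendsto_atTop_mono (f := fun n : ℕ => (n:ℝ)/4 - 1)
    · intro n
      rcases Nat.even_or_odd n with ⟨m, rfl⟩ | ⟨m, rfl⟩
      · have e : m + m = 2*m := by ring
        rw [e, hr2k]
        have := hz m
        have : ((2*m : ℕ):ℝ) = 2*(m:ℝ) := by push_cast; ring
        rw [this]
        have := hz m
        linarith
      · rw [hr2k1]
        have h1 : b m / 2 ≤ c m := by
          have := ha m; simp only [hc]; linarith
        have h2 := hbk m
        have : ((2*m+1 : ℕ):ℝ) = 2*(m:ℝ)+1 := by push_cast; ring
        rw [this]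
        linarith
    · apply tendsto_atTop_add_const_right
      apply Tendsto.atTop_div_const (by norm_num)
      exact tendsto_natCast_atTop_atTop
  have hnk : StrictMono (fun k : ℕ => 2*k) := fun i j hij => by dsimp only; omega
  have hxmem : z ∈ SeqSet p (fun k => r ((fun k : ℕ => 2*k) k)) := by
    refine ⟨1, ?_⟩
    have : (fun k : ℕ => dist (z k) p / r ((fun k : ℕ => 2*k) k)) = fun k => 1 := by
      funext k
      simp only [hr2k k]
      exact div_self (hzpos k).ne'
    rw [this]
    exact tendsto_const_nhds
  obtain ⟨y, ⟨l, hyl⟩, hyk⟩ := H r hrpos hrtop (fun k : ℕ => 2*k) hnk z hxmem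
  -- along evens, the limit is 1
  have heven : Tendsto (fun k : ℕ => dist (y (2*k)) p / r (2*k)) atTop (𝓝 l) :=
    hyl.comp (hnk.tendsto_atTop)
  have hl1 : l = 1 := by
    have : (fun k : ℕ => dist (y (2*k)) p / r (2*k)) = fun k => 1 := by
      funext k
      rw [hyk k, hr2k k]
      exact div_self (hzpos k).ne'
    rw [this] at heven
    exact tendsto_nhds_unique heven tendsto_const_nhds
  -- along odds, contradiction
  have hodd : Tendsto (fun k : ℕ => dist (y (2*k+1)) p / c k) atTop (𝓝 1) := by
    have hmono : StrictMono (fun k : ℕ => 2*k+1) := fun i j hij => by dsimp only; omega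
    have := hyl.comp hmono.tendsto_atTop
    rw [hl1] at this
    convert this using 2 with k
    simp only [Function.comp]
    rw [hr2k1 k]
  rw [Metric.tendsto_atTop] at hodd
  obtain ⟨K, hK⟩ := hodd (ε/4) (by linarith)
  have hKK := hK K le_rfl
  set s := dist (y (2*K+1)) p with hs
  have hsE : s ∈ E := ⟨y (2*K+1), rfl⟩
  have hsnot : s ∉ Set.Ioo (a K) (b K) := by
    intro hmem
    have : s ∈ Set.Ioo (a K) (b K) ∩ E := ⟨hmem, hsE⟩
    rw [hgap K] at this
    exact this
  have habK := hab K
  have hdist : (b K - a K)/2 ≤ |s - c K| := by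
    rw [Set.mem_Ioo, not_and_or, not_lt, not_lt] at hsnot
    rcases hsnot with h' | h'
    · rw [abs_sub_comm, abs_of_nonneg (by simp only [hc]; linarith)]
      simp only [hc]; linarith
    · rw [abs_of_nonneg (by simp only [hc]; linarith)]
      simp only [hc]; linarith
  have hfinal : ε/4 < |s/c K - 1| := by
    have hcK := hcpos K
    rw [show s/c K - 1 = (s - c K)/c K by field_simp, abs_div, abs_of_pos hcK,
      lt_div_iff₀ hcK]
    have h1 := hba K
    have h2 := hcb K
    have h3 := hdist
    nlinarith
  rw [Real.dist_eq] at hKK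
  linarith [hfinal, hKK]
end Bwd
end Helpers

theorem nonporous_iff_subseq_lifting {X : Type*} [MetricSpace X] (p : X)
    (hX : ∀ C : ℝ, ∃ x : X, C < dist x p) :
    porosityAtInfty {t : ℝ | ∃ x : X, dist x p = t} = 0 ↔
    ∀ r : ℕ → ℝ, (∀ n, 0 < r n) → Tendsto r atTop atTop →
      ∀ nk : ℕ → ℕ, StrictMono nk →
        ∀ x ∈ SeqSet p (fun k => r (nk k)),
          ∃ y ∈ SeqSet p r, ∀ k, y (nk k) = x k :=
  ⟨fwd_dir p, bwd_dir p hX⟩
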